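/- For every natural number n, C(2n,n)^2 * (sum over k = 0..n of C(n,k)^2 · C(2n+k,n)) equals the sum over all pairs (k,l) with 0 ≤ k ≤ l ≤ n of C(n,k) · C(n,l) · C(n+k,n) · C(n+l,n) · C(2n+l,n) · C(n,l−k). (This is the equality of the two expressions for A_n in case #99 of the table; the terms with k > l vanish because C(n,l−k) = 0 for l < k.) -/

import Mathlib

open Finset

/-- Vandermonde's identity in `range` form. -/
lemma vand_range (a b c : ℕ) :
    (a + b).choose c = ∑ q ∈ Finset.range (c + 1), a.choose q * b.choose (c - q) := by
  rw [Nat.add_choose_eq, Finset.Nat.sum_antidiagonal_eq_sum_range_succ_mk]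

/-- Trinomial revision, valid without the hypothesis `p ≤ y` as long as `d ≤ p`. -/
lemma chain2 (y p d : ℕ) (hdp : d ≤ p) :
    y.choose p * p.choose d = y.choose d * (y - d).choose (p - d) := by
  rcases le_or_gt p y with h | h
  · exact Nat.choose_mul hdp
  · rcases le_or_gt d y with h' | h'
    · rw [Nat.choose_eq_zero_of_lt h, Nat.choose_eq_zero_of_lt (by omega : y - d < p - d)]
      ring
    · rw [Nat.choose_eq_zero_of_lt (by omega : y < p), Nat.choose_eq_zero_of_lt h']
      ring

/-- `C(2n+a, 2n) C(2n, n) = C(2n+a, n) C(n+a, n)` (subset chain). -/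
lemma chain3 (n a : ℕ) :
    (2 * n + a).choose (2 * n) * (2 * n).choose n
      = (2 * n + a).choose n * (n + a).choose n := by
  have h := Nat.choose_mul (n := 2 * n + a) (k := 2 * n) (s := n)
    (by omega)
  rw [h]
  congr 1
  · congr 1 <;> omega

/-- Inner Saalschütz-type evaluation:
`∑_m C(n,m) C(n,k+m) C(k+m,q) = C(n,q) C(2n−q,d)` where `n = k + d`. -/
lemma Bsum (k d q : ℕ) :
    ∑ m ∈ Finset.range (k + d + 1),
        (k + d).choose m * ((k + d).choose (k + m) * (k + m).choose q)
      = (k + d).choose q * (2 * (k + d) - q).choose d := by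
  set n := k + d with hn
  rcases le_or_gt q n with hq | hq
  · -- shrink to range (d+1)
    have hsub : Finset.range (d + 1) ⊆ Finset.range (n + 1) := by
      apply Finset.range_subset_range.2; omega
    rw [← Finset.sum_subset hsub (by
      intro m hm hm'
      simp only [Finset.mem_range] at hm hm'
      rw [Nat.choose_eq_zero_of_lt (by omega : n < k + m)]
      ring)]
    have hcongr : ∀ m ∈ Finset.range (d + 1),
        n.choose m * (n.choose (k + m) * (k + m).choose q)
          = n.choose q * (n.choose m * (n - q).choose (d - m)) := by
      intro m hm
      simp only [Finset.mem_range] at hm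
      rcases le_or_gt q (k + m) with hqm | hqm
      · rw [Nat.choose_mul hqm]
        have : (n - q).choose (k + m - q) = (n - q).choose (d - m) :=
          Nat.choose_symm_of_eq_add (by omega)
        rw [this]; ring
      · rw [Nat.choose_eq_zero_of_lt hqm,
          Nat.choose_eq_zero_of_lt (by omega : n - q < d - m)]
        ring
    rw [Finset.sum_congr rfl hcongr, ← Finset.mul_sum]
    congr 1
    have hv := vand_range n (n - q) d
    rw [← hv]
    congr 1
    omega
  · -- q > n : both sides vanish
    rw [Nat.choose_eq_zero_of_lt hq]
    rw [Finset.sum_eq_zero, Nat.zero_mul]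
    intro m hm
    rcases le_or_gt (k + m) n with h | h
    · rw [Nat.choose_eq_zero_of_lt (by omega : k + m < q)]; ring
    · rw [Nat.choose_eq_zero_of_lt h]; ring

/-- Key Pfaff–Saalschütz instance:
`∑_m C(n,m) C(n,k+m) C(y+k+m, 2n) = C(y+k, n+k) C(y, n−k)` with `n = k+d`. -/
lemma key (k d y : ℕ) :
    ∑ m ∈ Finset.range (k + d + 1),
        (k + d).choose m * ((k + d).choose (k + m) * (y + (k + m)).choose (2 * (k + d)))
      = (y + k).choose (k + d + k) * y.choose d := by
  set n := k + d with hn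
  have step1 : ∀ m, (y + (k + m)).choose (2 * n)
      = ∑ q ∈ Finset.range (2 * n + 1), (k + m).choose q * y.choose (2 * n - q) := by
    intro m
    rw [show y + (k + m) = (k + m) + y by ring, vand_range]
  calc
    ∑ m ∈ Finset.range (n + 1),
        n.choose m * (n.choose (k + m) * (y + (k + m)).choose (2 * n))
      = ∑ m ∈ Finset.range (n + 1), ∑ q ∈ Finset.range (2 * n + 1),
          (n.choose m * (n.choose (k + m) * (k + m).choose q)) * y.choose (2 * n - q) := by
        refine Finset.sum_congr rfl fun m _ => ?_
        rw [step1 m, Finset.mul_sum, Finset.mul_sum]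
        refine Finset.sum_congr rfl fun q _ => ?_
        ring
    _ = ∑ q ∈ Finset.range (2 * n + 1),
          (∑ m ∈ Finset.range (n + 1),
            n.choose m * (n.choose (k + m) * (k + m).choose q)) * y.choose (2 * n - q) := by
        rw [Finset.sum_comm]
        refine Finset.sum_congr rfl fun q _ => ?_
        rw [Finset.sum_mul]
    _ = ∑ q ∈ Finset.range (2 * n + 1),
          (n.choose q * (2 * n - q).choose d) * y.choose (2 * n - q) := by
        refine Finset.sum_congr rfl fun q _ => ?_
        rw [Bsum]
    _ = ∑ q ∈ Finset.range (n + 1),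
          (n.choose q * (2 * n - q).choose d) * y.choose (2 * n - q) := by
        refine (Finset.sum_subset (Finset.range_subset_range.2 (by omega)) ?_).symm
        intro q hq hq'
        simp only [Finset.mem_range] at hq hq'
        rw [Nat.choose_eq_zero_of_lt (by omega : n < q)]
        ring
    _ = y.choose d * ∑ q ∈ Finset.range (n + 1),
          n.choose q * (y - d).choose ((2 * n - d) - q) := by
        rw [Finset.mul_sum]
        refine Finset.sum_congr rfl fun q hq => ?_
        simp only [Finset.mem_range] at hq
        have h2 : y.choose (2 * n - q) * (2 * n - q).choose d
            = y.choose d * (y - d).choose ((2 * n - q) - d) := chain2 y _ d (by omega)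
        have h3 : (2 * n - q) - d = (2 * n - d) - q := by omega
        rw [h3] at h2
        calc n.choose q * (2 * n - q).choose d * y.choose (2 * n - q)
            = n.choose q * (y.choose (2 * n - q) * (2 * n - q).choose d) := by ring
          _ = y.choose d * (n.choose q * (y - d).choose ((2 * n - d) - q)) := by
              rw [h2]; ring
    _ = y.choose d * ∑ q ∈ Finset.range ((2 * n - d) + 1),
          n.choose q * (y - d).choose ((2 * n - d) - q) := by
        congr 1
        refine Finset.sum_subset (Finset.range_subset_range.2 (by omega)) ?_
        intro q hq hq'
        simp only [Finset.mem_range] at hq hq'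
        rw [Nat.choose_eq_zero_of_lt (by omega : n < q)]
        ring
    _ = y.choose d * (n + (y - d)).choose (2 * n - d) := by
        rw [← vand_range]
    _ = (y + k).choose (n + k) * y.choose d := by
        rcases le_or_gt d y with h | h
        · rw [show n + (y - d) = y + k by omega, show 2 * n - d = n + k by omega]
          ring
        · rw [Nat.choose_eq_zero_of_lt h]
          ring

/-- Final product-of-binomials identity. -/
lemma fin_id (n k : ℕ) (hk : k ≤ n) :
    (n + k).choose n * ((2 * n + k).choose (n + k) * (2 * n).choose (n - k))
      = (2 * n).choose n * (n.choose k * (2 * n + k).choose n) := by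
  have c1 : (2 * n + k).choose (n + k) * (n + k).choose n
      = (2 * n + k).choose n * (n + k).choose k := by
    rw [Nat.choose_mul (by omega : n ≤ n + k)]
    congr 2 <;> omega
  have csymm : (2 * n).choose (n - k) = (2 * n).choose (n + k) := by
    rw [show n + k = 2 * n - (n - k) by omega]
    exact (Nat.choose_symm (by omega)).symm
  have c2 : (2 * n).choose (n + k) * (n + k).choose k
      = (2 * n).choose k * (2 * n - k).choose n := by
    rw [Nat.choose_mul (by omega : k ≤ n + k)]
    congr 2 <;> omega
  have c3 : (2 * n).choose n * n.choose k
      = (2 * n).choose k * (2 * n - k).choose (n - k) := by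
    rw [Nat.choose_mul hk]
  have c4 : (2 * n - k).choose n = (2 * n - k).choose (n - k) :=
    Nat.choose_symm_of_eq_add (by omega)
  calc (n + k).choose n * ((2 * n + k).choose (n + k) * (2 * n).choose (n - k))
      = ((2 * n + k).choose (n + k) * (n + k).choose n) * (2 * n).choose (n - k) := by ring
    _ = ((2 * n + k).choose n * (n + k).choose k) * (2 * n).choose (n + k) := by
        rw [c1, csymm]
    _ = (2 * n + k).choose n * ((2 * n).choose (n + k) * (n + k).choose k) := by ring
    _ = (2 * n + k).choose n * ((2 * n).choose k * (2 * n - k).choose (n - k)) := by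
        rw [c2, c4]
    _ = (2 * n + k).choose n * ((2 * n).choose n * n.choose k) := by rw [← c3]
    _ = (2 * n).choose n * (n.choose k * (2 * n + k).choose n) := by ring

/-- The inner sum over `l` for fixed `k`. -/
lemma innerSum99 (n k : ℕ) (hk : k ≤ n) :
    ∑ l ∈ Finset.Ico k (n + 1),
        n.choose k * n.choose l * (n + k).choose n * (n + l).choose n *
          (2 * n + l).choose n * n.choose (l - k)
      = (2 * n).choose n ^ 2 * (n.choose k ^ 2 * (2 * n + k).choose n) := by
  rw [Finset.sum_Ico_eq_sum_range]
  have hrange : n + 1 - k = (n - k) + 1 := by omega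
  rw [hrange]
  have step : ∀ m,
      n.choose k * n.choose (k + m) * (n + k).choose n * (n + (k + m)).choose n *
          (2 * n + (k + m)).choose n * n.choose (k + m - k)
        = (n.choose k * ((n + k).choose n * (2 * n).choose n)) *
            (n.choose m * (n.choose (k + m) * (2 * n + (k + m)).choose (2 * n))) := by
    intro m
    have h := chain3 n (k + m)
    have hsimp : k + m - k = m := by omega
    rw [hsimp]
    calc n.choose k * n.choose (k + m) * (n + k).choose n * (n + (k + m)).choose n *
            (2 * n + (k + m)).choose n * n.choose m
        = (n.choose k * n.choose (k + m) * (n + k).choose n * n.choose m) *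
            ((2 * n + (k + m)).choose n * (n + (k + m)).choose n) := by ring
      _ = (n.choose k * n.choose (k + m) * (n + k).choose n * n.choose m) *
            ((2 * n + (k + m)).choose (2 * n) * (2 * n).choose n) := by rw [h]
      _ = (n.choose k * ((n + k).choose n * (2 * n).choose n)) *
            (n.choose m * (n.choose (k + m) * (2 * n + (k + m)).choose (2 * n))) := by ring
  calc
    ∑ m ∈ Finset.range ((n - k) + 1),
        n.choose k * n.choose (k + m) * (n + k).choose n * (n + (k + m)).choose n *
          (2 * n + (k + m)).choose n * n.choose (k + m - k)
      = ∑ m ∈ Finset.range ((n - k) + 1),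
          (n.choose k * ((n + k).choose n * (2 * n).choose n)) *
            (n.choose m * (n.choose (k + m) * (2 * n + (k + m)).choose (2 * n))) := by
        exact Finset.sum_congr rfl fun m _ => step m
    _ = (n.choose k * ((n + k).choose n * (2 * n).choose n)) *
          ∑ m ∈ Finset.range ((n - k) + 1),
            n.choose m * (n.choose (k + m) * (2 * n + (k + m)).choose (2 * n)) := by
        rw [Finset.mul_sum]
    _ = (n.choose k * ((n + k).choose n * (2 * n).choose n)) *
          ∑ m ∈ Finset.range (n + 1),
            n.choose m * (n.choose (k + m) * (2 * n + (k + m)).choose (2 * n)) := by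
        congr 1
        refine Finset.sum_subset (Finset.range_subset_range.2 (by omega)) ?_
        intro m hm hm'
        simp only [Finset.mem_range] at hm hm'
        rw [Nat.choose_eq_zero_of_lt (by omega : n < k + m)]
        ring
    _ = (n.choose k * ((n + k).choose n * (2 * n).choose n)) *
          ((2 * n + k).choose (n + k) * (2 * n).choose (n - k)) := by
        congr 1
        have hkey := key k (n - k) (2 * n)
        rw [show k + (n - k) = n by omega] at hkey
        rw [show (2 : ℕ) * n + k = 2 * n + k by ring] at hkey
        calc ∑ m ∈ Finset.range (n + 1),
              n.choose m * (n.choose (k + m) * (2 * n + (k + m)).choose (2 * n))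
            = ∑ m ∈ Finset.range (n + 1),
              n.choose m * (n.choose (k + m) * ((2 * n) + (k + m)).choose (2 * n)) := rfl
          _ = (2 * n + k).choose (n + k) * (2 * n).choose (n - k) := hkey
    _ = (2 * n).choose n ^ 2 * (n.choose k ^ 2 * (2 * n + k).choose n) := by
        calc (n.choose k * ((n + k).choose n * (2 * n).choose n)) *
              ((2 * n + k).choose (n + k) * (2 * n).choose (n - k))
            = (n.choose k * (2 * n).choose n) *
                ((n + k).choose n * ((2 * n + k).choose (n + k) * (2 * n).choose (n - k))) := by
              ring
          _ = (n.choose k * (2 * n).choose n) *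
                ((2 * n).choose n * (n.choose k * (2 * n + k).choose n)) := by
              rw [fin_id n k hk]
          _ = (2 * n).choose n ^ 2 * (n.choose k ^ 2 * (2 * n + k).choose n) := by ring

/-- Case #99: C(2n,n)^2 ∑_{k=0}^n C(n,k)^2 C(2n+k,n) equals the double sum over
0 ≤ k ≤ l ≤ n of C(n,k) C(n,l) C(n+k,n) C(n+l,n) C(2n+l,n) C(n,l−k). -/
theorem stmt_15 (n : ℕ) :
    (Nat.choose (2 * n) n) ^ 2 *
      ∑ k ∈ Finset.range (n + 1), (n.choose k) ^ 2 * Nat.choose (2 * n + k) n =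
    ∑ l ∈ Finset.range (n + 1), ∑ k ∈ Finset.range (l + 1),
      n.choose k * n.choose l * Nat.choose (n + k) n * Nat.choose (n + l) n *
        Nat.choose (2 * n + l) n * n.choose (l - k) := by
  have hswap :
      (∑ l ∈ Finset.range (n + 1), ∑ k ∈ Finset.range (l + 1),
        n.choose k * n.choose l * Nat.choose (n + k) n * Nat.choose (n + l) n *
          Nat.choose (2 * n + l) n * n.choose (l - k))
      = ∑ k ∈ Finset.range (n + 1), ∑ l ∈ Finset.Ico k (n + 1),
          n.choose k * n.choose l * Nat.choose (n + k) n * Nat.choose (n + l) n *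
            Nat.choose (2 * n + l) n * n.choose (l - k) := by
    have h := Finset.sum_Ico_Ico_comm 0 (n + 1) (fun k l =>
      n.choose k * n.choose l * Nat.choose (n + k) n * Nat.choose (n + l) n *
        Nat.choose (2 * n + l) n * n.choose (l - k))
    simp only [← Finset.range_eq_Ico] at h
    exact h.symm
  rw [hswap, Finset.mul_sum]
  refine Finset.sum_congr rfl fun k hk => ?_
  simp only [Finset.mem_range] at hk
  exact (innerSum99 n k (by omega)).symm
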